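/- In the 2DistinctSCS instance, every diff from the source B-values to the target B-values under the family F(U,←) has total range count at least 2n, and for each k ∈ {1,…,n} at least two of its operations affect partition P_k. -/

import Mathlib

open scoped Classical

/-- An operation of the family `F(U,←)`: a finite union of closed real ranges
`⋃_j [a_j, z_j]` (given as a list of pairs) and a value `b`; the condition is
`A ∈ ⋃_j [a_j, z_j]` and the modifier is the assignment `B ← b`. -/
structure OpUnionAsg where
  ranges : List (ℝ × ℝ)
  b : ℝ

/-- The condition of an operation of `F(U,←)`, evaluated on an `A`-value `v`:
`v` lies in some range of the union. -/
def OpUnionAsg.cond (f : OpUnionAsg) (v : ℤ) : Prop :=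
  ∃ p ∈ f.ranges, p.1 ≤ (v : ℝ) ∧ (v : ℝ) ≤ p.2

/-- Applying an operation of `F(U,←)`: every key whose `A`-value lies in the union gets
its `B`-value replaced by `b`; other keys are unchanged. -/
noncomputable def OpUnionAsg.apply {K : Type*} (α : K → ℤ) (f : OpUnionAsg) (β : K → ℝ) :
    K → ℝ :=
  fun k => if f.cond (α k) then f.b else β k

/-- Successive application of a finite sequence of operations of `F(U,←)`. -/
noncomputable def applyOpsUnionAsg {K : Type*} (α : K → ℤ) (L : List OpUnionAsg)
    (β : K → ℝ) : K → ℝ :=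
  L.foldl (fun β' f => f.apply α β') β

/-- `L` is a diff from `βS` to `βT` under `F(U,←)`. -/
def IsDiffUnionAsg {K : Type*} (α : K → ℤ) (L : List OpUnionAsg) (βS βT : K → ℝ) : Prop :=
  applyOpsUnionAsg α L βS = βT

/-- `A`-values of the 2DistinctSCS instance on the key set `{0,…,5n+1}`:
the keys `5k` and `5k+1` have `A`-value `4k` (for `0 ≤ k ≤ n`), and the keys
`5k-3, 5k-2, 5k-1` have `A`-values `4k-3, 4k-2, 4k-1` (for `1 ≤ k ≤ n`). -/
def scsAlpha (n : ℕ) : Fin (5 * n + 2) → ℤ :=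
  fun j => ((4 * ((j : ℕ) / 5) + (if (j : ℕ) % 5 ≤ 1 then 0 else (j : ℕ) % 5 - 1) : ℕ) : ℤ)

/-- Source `B`-values of the 2DistinctSCS instance: `-1` at keys `5k`, `-2` at keys
`5k+1`, and `0` at the keys `5k-3, 5k-2, 5k-1`. -/
def scsBS (n : ℕ) : Fin (5 * n + 2) → ℝ :=
  fun j => if (j : ℕ) % 5 = 0 then -1 else if (j : ℕ) % 5 = 1 then -2 else 0

/-- Target `B`-values of the 2DistinctSCS instance with symbols `u k, v k` of the string
`s_k`: `-1` at keys `5k`, `-2` at keys `5k+1`, and `u k, v k, u k` at the keys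
`5k-3, 5k-2, 5k-1` respectively. -/
noncomputable def scsBT (n : ℕ) (u v : ℕ → ℤ) : Fin (5 * n + 2) → ℝ :=
  fun j =>
    if (j : ℕ) % 5 = 0 then -1
    else if (j : ℕ) % 5 = 1 then -2
    else if (j : ℕ) % 5 = 3 then (v ((j : ℕ) / 5 + 1) : ℝ)
    else (u ((j : ℕ) / 5 + 1) : ℝ)

/-- The total range count of a sequence of operations of `F(U,←)`: the sum over its
operations of the number of ranges in the operation's condition. -/
def totalRangeCount (L : List OpUnionAsg) : ℕ :=
  (L.map fun f => f.ranges.length).sum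

/-- An operation affects partition `P_k` if its condition matches the `A`-value of some
key whose `A`-value lies strictly between `4k - 4` and `4k`. -/
def Affects (n : ℕ) (f : OpUnionAsg) (k : ℕ) : Prop :=
  ∃ j : Fin (5 * n + 2),
    (4 * (k : ℤ) - 4 < scsAlpha n j ∧ scsAlpha n j < 4 * (k : ℤ)) ∧ f.cond (scsAlpha n j)

/-! ### Auxiliary definitions and lemmas -/

/-- Per-A-value version of successive application. -/
noncomputable def applyVal (L : List OpUnionAsg) (a : ℤ) (x : ℝ) : ℝ :=
  L.foldl (fun y f => if f.cond a then f.b else y) x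

lemma applyOps_eq_applyVal {K : Type*} (α : K → ℤ) (L : List OpUnionAsg) (β : K → ℝ)
    (k : K) : applyOpsUnionAsg α L β k = applyVal L (α k) (β k) := by
  induction L generalizing β with
  | nil => rfl
  | cons f M ih =>
      have : applyOpsUnionAsg α (f :: M) β = applyOpsUnionAsg α M (f.apply α β) := rfl
      rw [this, ih]
      rfl

lemma applyVal_of_not_mem (L : List OpUnionAsg) (a : ℤ) (x : ℝ)
    (h : ∀ f ∈ L, ¬ f.cond a) : applyVal L a x = x := by
  induction L generalizing x with
  | nil => rfl
  | cons f M ih =>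
      have hf : ¬ f.cond a := h f (List.mem_cons_self)
      have : applyVal (f :: M) a x = applyVal M a (if f.cond a then f.b else x) := rfl
      rw [this, if_neg hf]
      exact ih x (fun g hg => h g (List.mem_cons_of_mem _ hg))

lemma applyVal_const (L : List OpUnionAsg) (a : ℤ) (h : ∃ f ∈ L, f.cond a) (x y : ℝ) :
    applyVal L a x = applyVal L a y := by
  induction L generalizing x y with
  | nil => simp at h
  | cons f M ih =>
      have hx : applyVal (f :: M) a x = applyVal M a (if f.cond a then f.b else x) := rfl
      have hy : applyVal (f :: M) a y = applyVal M a (if f.cond a then f.b else y) := rfl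
      rw [hx, hy]
      by_cases hf : f.cond a
      · rw [if_pos hf, if_pos hf]
      · rw [if_neg hf, if_neg hf]
        rcases h with ⟨g, hg, hgc⟩
        rcases List.mem_cons.mp hg with rfl | hgM
        · exact absurd hgc hf
        · exact ih ⟨g, hgM, hgc⟩ x y

lemma applyVal_last (L : List OpUnionAsg) (a : ℤ) (x : ℝ) (h : ∃ f ∈ L, f.cond a) :
    ∃ i : Fin L.length, (L.get i).cond a ∧ applyVal L a x = (L.get i).b := by
  induction L generalizing x with
  | nil => simp at h
  | cons f M ih =>
      have hx : applyVal (f :: M) a x = applyVal M a (if f.cond a then f.b else x) := rfl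
      by_cases hM : ∃ g ∈ M, g.cond a
      · rcases ih (if f.cond a then f.b else x) hM with ⟨i, hc, he⟩
        refine ⟨i.succ, ?_, ?_⟩
        · simpa using hc
        · rw [hx, he]; simp
      · push_neg at hM
        have hf : f.cond a := by
          rcases h with ⟨g, hg, hgc⟩
          rcases List.mem_cons.mp hg with rfl | hgM
          · exact hgc
          · exact absurd hgc (hM g hgM)
        refine ⟨⟨0, by simp⟩, hf, ?_⟩
        rw [hx, if_pos hf]
        exact applyVal_of_not_mem M a f.b hM

lemma sum_map_get (L : List OpUnionAsg) (g : OpUnionAsg → ℕ) :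
    (L.map g).sum = ∑ i : Fin L.length, g (L.get i) := by
  induction L with
  | nil => simp
  | cons f M ih =>
      rw [List.map_cons, List.sum_cons, ih]
      rw [show (∑ i : Fin (f :: M).length, g ((f :: M).get i))
            = ∑ i : Fin (M.length + 1), g ((f :: M).get i) from rfl,
          Fin.sum_univ_succ]
      rfl

lemma sum_countP_le {γ : Type*} (s : Finset ℕ) (P : ℕ → γ → Bool) :
    ∀ l : List γ, (∀ x ∈ l, ∀ k ∈ s, ∀ k' ∈ s, P k x → P k' x → k = k') →
      ∑ k ∈ s, l.countP (P k) ≤ l.length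
  | [], _ => by simp
  | x :: l, h => by
      simp only [List.countP_cons, List.length_cons]
      rw [Finset.sum_add_distrib]
      have h1 : ∑ k ∈ s, (if P k x then 1 else 0) ≤ 1 := by
        rw [Finset.sum_boole]
        have : (s.filter (fun k => P k x = true)).card ≤ 1 := by
          apply Finset.card_le_one.mpr
          intro a ha b hb
          simp only [Finset.mem_filter] at ha hb
          exact h x (List.mem_cons_self) a ha.1 b hb.1 ha.2 hb.2
        simpa using this
      have h2 := sum_countP_le s P l
        (fun y hy => h y (List.mem_cons_of_mem _ hy))
      omega

/-- In the 2DistinctSCS instance, every diff from the source `B`-values to the target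
`B`-values under `F(U,←)` has total range count at least `2n`, and for each
`k ∈ {1,…,n}` at least two of its operations affect partition `P_k`. -/
theorem scs_diff_totalRangeCount_lower_bound (n : ℕ) (u v : ℕ → ℤ)
    (hu : ∀ k, 1 ≤ k → k ≤ n → 0 < u k) (hv : ∀ k, 1 ≤ k → k ≤ n → 0 < v k)
    (huv : ∀ k, 1 ≤ k → k ≤ n → u k ≠ v k) (t : ℕ)
    (L : List OpUnionAsg) (hL : IsDiffUnionAsg (scsAlpha n) L (scsBS n) (scsBT n u v)) :
    2 * n ≤ totalRangeCount L ∧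
      ∀ k, 1 ≤ k → k ≤ n →
        ∃ i j : Fin L.length, i ≠ j ∧ Affects n (L.get i) k ∧ Affects n (L.get j) k := by
    classical
  unfold IsDiffUnionAsg at hL
  -- evaluate the diff key-by-key through `applyVal`
  have hval : ∀ (jn : ℕ) (hjn : jn < 5 * n + 2),
      applyVal L (scsAlpha n ⟨jn, hjn⟩) (scsBS n ⟨jn, hjn⟩) = scsBT n u v ⟨jn, hjn⟩ := by
    intro jn hjn
    rw [← applyOps_eq_applyVal, hL]
  -- Step 1: no operation in L matches a boundary A-value 4k
  have hnb : ∀ k : ℕ, k ≤ n → ∀ f ∈ L, ¬ f.cond (4 * (k : ℤ)) := by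
    intro k hk f hf hc
    have h0 : 5 * k < 5 * n + 2 := by omega
    have h1 : 5 * k + 1 < 5 * n + 2 := by omega
    have e0 : scsAlpha n ⟨5 * k, h0⟩ = 4 * (k : ℤ) := by
      have a1 : (5 * k) / 5 = k := by omega
      have a2 : (5 * k) % 5 = 0 := by omega
      simp [scsAlpha, a1, a2]
    have e1 : scsAlpha n ⟨5 * k + 1, h1⟩ = 4 * (k : ℤ) := by
      have a1 : (5 * k + 1) / 5 = k := by omega
      have a2 : (5 * k + 1) % 5 = 1 := by omega
      simp [scsAlpha, a1, a2]
    have b0 : scsBS n ⟨5 * k, h0⟩ = -1 := by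
      have a2 : (5 * k) % 5 = 0 := by omega
      simp [scsBS, a2]
    have b1 : scsBS n ⟨5 * k + 1, h1⟩ = -2 := by
      have a2 : (5 * k + 1) % 5 = 1 := by omega
      simp [scsBS, a2]
    have c0 : scsBT n u v ⟨5 * k, h0⟩ = -1 := by
      have a2 : (5 * k) % 5 = 0 := by omega
      simp [scsBT, a2]
    have c1 : scsBT n u v ⟨5 * k + 1, h1⟩ = -2 := by
      have a2 : (5 * k + 1) % 5 = 1 := by omega
      simp [scsBT, a2]
    have hv0 := hval (5 * k) h0
    have hv1 := hval (5 * k + 1) h1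
    rw [e0, b0, c0] at hv0
    rw [e1, b1, c1] at hv1
    have := applyVal_const L (4 * (k : ℤ)) ⟨f, hf, hc⟩ (-1) (-2)
    rw [hv0, hv1] at this
    norm_num at this
  -- alpha values inside partitions
  have halpha1 : ∀ k, 1 ≤ k → ∀ (hj : 5 * k - 3 < 5 * n + 2),
      scsAlpha n ⟨5 * k - 3, hj⟩ = 4 * (k : ℤ) - 3 := by
    intro k hk1 hj
    have a1 : (5 * k - 3) / 5 = k - 1 := by omega
    have a2 : (5 * k - 3) % 5 = 2 := by omega
    simp [scsAlpha, a1, a2]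
    omega
  have halpha2 : ∀ k, 1 ≤ k → ∀ (hj : 5 * k - 2 < 5 * n + 2),
      scsAlpha n ⟨5 * k - 2, hj⟩ = 4 * (k : ℤ) - 2 := by
    intro k hk1 hj
    have a1 : (5 * k - 2) / 5 = k - 1 := by omega
    have a2 : (5 * k - 2) % 5 = 3 := by omega
    simp [scsAlpha, a1, a2]
    omega
  -- Step 2: for each k there are two distinct indices whose ops match 4k-3 resp. 4k-2
  have htwo : ∀ k, 1 ≤ k → k ≤ n → ∃ i j : Fin L.length, i ≠ j ∧
      (L.get i).cond (4 * (k : ℤ) - 3) ∧ (L.get j).cond (4 * (k : ℤ) - 2) := by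
    intro k hk1 hk2
    have hj1 : 5 * k - 3 < 5 * n + 2 := by omega
    have hj2 : 5 * k - 2 < 5 * n + 2 := by omega
    have b1 : scsBS n ⟨5 * k - 3, hj1⟩ = 0 := by
      have a2 : (5 * k - 3) % 5 = 2 := by omega
      simp [scsBS, a2]
    have b2 : scsBS n ⟨5 * k - 2, hj2⟩ = 0 := by
      have a2 : (5 * k - 2) % 5 = 3 := by omega
      simp [scsBS, a2]
    have c1 : scsBT n u v ⟨5 * k - 3, hj1⟩ = (u k : ℝ) := by
      have a1 : (5 * k - 3) / 5 + 1 = k := by omega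
      have a2 : (5 * k - 3) % 5 = 2 := by omega
      simp [scsBT, a2, a1]
    have c2 : scsBT n u v ⟨5 * k - 2, hj2⟩ = (v k : ℝ) := by
      have a1 : (5 * k - 2) / 5 + 1 = k := by omega
      have a2 : (5 * k - 2) % 5 = 3 := by omega
      simp [scsBT, a2, a1]
    have hv1 := hval (5 * k - 3) hj1
    have hv2 := hval (5 * k - 2) hj2
    rw [halpha1 k hk1 hj1, b1, c1] at hv1
    rw [halpha2 k hk1 hj2, b2, c2] at hv2
    have hm1 : ∃ f ∈ L, f.cond (4 * (k : ℤ) - 3) := by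
      by_contra hno
      push_neg at hno
      rw [applyVal_of_not_mem L _ 0 hno] at hv1
      have := hu k hk1 hk2
      have : (u k : ℝ) = 0 := hv1.symm
      have : u k = 0 := by exact_mod_cast this
      omega
    have hm2 : ∃ f ∈ L, f.cond (4 * (k : ℤ) - 2) := by
      by_contra hno
      push_neg at hno
      rw [applyVal_of_not_mem L _ 0 hno] at hv2
      have := hv k hk1 hk2
      have : (v k : ℝ) = 0 := hv2.symm
      have : v k = 0 := by exact_mod_cast this
      omega
    obtain ⟨i, hci, hbi⟩ := applyVal_last L _ 0 hm1
    obtain ⟨j, hcj, hbj⟩ := applyVal_last L _ 0 hm2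
    rw [hv1] at hbi
    rw [hv2] at hbj
    refine ⟨i, j, ?_, hci, hcj⟩
    intro hij
    rw [hij] at hbi
    rw [← hbj] at hbi
    have : u k = v k := by exact_mod_cast hbi
    exact huv k hk1 hk2 this
  -- the second conclusion
  have haff : ∀ k, 1 ≤ k → k ≤ n →
      ∃ i j : Fin L.length, i ≠ j ∧ Affects n (L.get i) k ∧ Affects n (L.get j) k := by
    intro k hk1 hk2
    obtain ⟨i, j, hij, hci, hcj⟩ := htwo k hk1 hk2
    have hj1 : 5 * k - 3 < 5 * n + 2 := by omega
    have hj2 : 5 * k - 2 < 5 * n + 2 := by omega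
    refine ⟨i, j, hij, ⟨⟨5 * k - 3, hj1⟩, ?_, ?_⟩, ⟨⟨5 * k - 2, hj2⟩, ?_, ?_⟩⟩
    · rw [halpha1 k hk1 hj1]; constructor <;> omega
    · rw [halpha1 k hk1 hj1]; exact hci
    · rw [halpha2 k hk1 hj2]; constructor <;> omega
    · rw [halpha2 k hk1 hj2]; exact hcj
  refine ⟨?_, haff⟩
  -- Step 3: counting ranges
  set Pb : ℕ → (ℝ × ℝ) → Bool := fun k p =>
    decide (∃ a : ℤ, 4 * (k : ℤ) - 4 < a ∧ a < 4 * (k : ℤ) ∧ p.1 ≤ (a : ℝ) ∧ (a : ℝ) ≤ p.2)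
    with hPb
  have hPbIff : ∀ k p, Pb k p = true ↔
      ∃ a : ℤ, 4 * (k : ℤ) - 4 < a ∧ a < 4 * (k : ℤ) ∧ p.1 ≤ (a : ℝ) ∧ (a : ℝ) ≤ p.2 := by
    intro k p
    rw [hPb]
    exact decide_eq_true_iff
  -- disjointness: a range can match at most one partition
  have hdisj : ∀ f ∈ L, ∀ p ∈ f.ranges, ∀ k ∈ Finset.Icc 1 n, ∀ k' ∈ Finset.Icc 1 n,
      Pb k p → Pb k' p → k = k' := by
    intro f hf p hp k hk k' hk' h1 h2
    rw [hPbIff] at h1 h2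
    simp only [Finset.mem_Icc] at hk hk'
    by_contra hne
    have key : ∀ k1 k2 : ℕ, k1 ≤ n → k1 < k2 →
        (∃ a : ℤ, 4 * (k1 : ℤ) - 4 < a ∧ a < 4 * (k1 : ℤ) ∧ p.1 ≤ (a : ℝ) ∧ (a : ℝ) ≤ p.2) →
        (∃ a : ℤ, 4 * (k2 : ℤ) - 4 < a ∧ a < 4 * (k2 : ℤ) ∧ p.1 ≤ (a : ℝ) ∧ (a : ℝ) ≤ p.2) →
        False := by
      intro k1 k2 hn1 hlt ⟨a, ha1, ha2, ha3, ha4⟩ ⟨a', hb1, hb2, hb3, hb4⟩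
      apply hnb k1 hn1 f hf
      refine ⟨p, hp, ?_, ?_⟩
      · have h : (a : ℝ) ≤ ((4 * (k1 : ℤ) : ℤ) : ℝ) := by
          exact_mod_cast (show a ≤ 4 * (k1 : ℤ) by omega)
        exact le_trans ha3 h
      · have h : ((4 * (k1 : ℤ) : ℤ) : ℝ) ≤ (a' : ℝ) := by
          exact_mod_cast (show 4 * (k1 : ℤ) ≤ a' by omega)
        exact le_trans h hb4
    rcases Nat.lt_or_ge k k' with h | h
    · exact key k k' (by omega) h h1 h2
    · have hlt : k' < k := by omega
      exact key k' k (by omega) hlt h2 h1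
  -- per-operation bound
  have hper : ∀ i : Fin L.length,
      ∑ k ∈ Finset.Icc 1 n, (L.get i).ranges.countP (Pb k) ≤ (L.get i).ranges.length := by
    intro i
    refine sum_countP_le _ _ _ ?_
    intro p hp k hk k' hk' h1 h2
    exact hdisj (L.get i) (List.get_mem L i) p hp k hk k' hk' h1 h2
  -- per-partition bound
  have hk2sum : ∀ k, 1 ≤ k → k ≤ n →
      2 ≤ ∑ i : Fin L.length, (L.get i).ranges.countP (Pb k) := by
    intro k hk1 hk2
    obtain ⟨i, j, hij, hci, hcj⟩ := htwo k hk1 hk2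
    have h1 : 1 ≤ (L.get i).ranges.countP (Pb k) := by
      obtain ⟨p, hp, hp1, hp2⟩ := hci
      refine Nat.one_le_iff_ne_zero.mpr (Nat.pos_iff_ne_zero.mp (List.countP_pos_iff.mpr ?_))
      exact ⟨p, hp, (hPbIff k p).mpr ⟨4 * (k : ℤ) - 3, by omega, by omega, hp1, hp2⟩⟩
    have h2 : 1 ≤ (L.get j).ranges.countP (Pb k) := by
      obtain ⟨p, hp, hp1, hp2⟩ := hcj
      refine Nat.one_le_iff_ne_zero.mpr (Nat.pos_iff_ne_zero.mp (List.countP_pos_iff.mpr ?_))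
      exact ⟨p, hp, (hPbIff k p).mpr ⟨4 * (k : ℤ) - 2, by omega, by omega, hp1, hp2⟩⟩
    have hsub : ({i, j} : Finset (Fin L.length)).sum
        (fun i' => (L.get i').ranges.countP (Pb k)) ≤
        ∑ i' : Fin L.length, (L.get i').ranges.countP (Pb k) :=
      Finset.sum_le_sum_of_subset (Finset.subset_univ _)
    rw [Finset.sum_pair hij] at hsub
    omega
  -- combine
  have h1 : ∑ k ∈ Finset.Icc 1 n, 2 ≤
      ∑ k ∈ Finset.Icc 1 n, ∑ i : Fin L.length, (L.get i).ranges.countP (Pb k) := by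
    refine Finset.sum_le_sum ?_
    intro k hk
    simp only [Finset.mem_Icc] at hk
    exact hk2sum k hk.1 hk.2
  rw [Finset.sum_comm] at h1
  have h2 : ∑ i : Fin L.length, ∑ k ∈ Finset.Icc 1 n, (L.get i).ranges.countP (Pb k) ≤
      ∑ i : Fin L.length, (L.get i).ranges.length :=
    Finset.sum_le_sum (fun i _ => hper i)
  have h3 : totalRangeCount L = ∑ i : Fin L.length, (L.get i).ranges.length :=
    sum_map_get L _
  have h4 : ∑ _k ∈ Finset.Icc 1 n, 2 = 2 * n := by
    rw [Finset.sum_const, Nat.card_Icc, smul_eq_mul]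
    omega
  omega
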